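/- For almost every t ∈ ℝ: for every ε > 0 there exists K ∈ ℕ such that for all k ≥ K one has q_{k+1}(t) ≤ q_k(t)^{1+ε}, where q₁(t) < q₂(t) < ⋯ is the increasing enumeration of the set Q(t) = { q ∈ ℤ, q ≥ 1 : ∃ a ∈ ℤ with |t/(2π) − a/q| ≤ 1/q² } (which is infinite for almost every t). -/

import Mathlib

open Filter MeasureTheory

/-- The set of positive integer denominators `q` for which the Dirichlet condition
`|t/(2π) - a/q| ≤ 1/q²` holds for some integer `a`. -/
def dirichletSet (t : ℝ) : Set ℕ :=
  {q : ℕ | 1 ≤ q ∧ ∃ a : ℤ, |t / (2 * Real.pi) - (a : ℝ) / (q : ℝ)| ≤ 1 / (q : ℝ) ^ 2}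

/-- The Dirichlet denominators of `x` itself (no `2π` scaling). -/
def qSet (x : ℝ) : Set ℕ :=
  {q : ℕ | 1 ≤ q ∧ ∃ a : ℤ, |x - (a : ℝ) / (q : ℝ)| ≤ 1 / (q : ℝ) ^ 2}

/-- The denominators giving an abnormally good approximation, of quality `2 + ε`. -/
def sSet (x : ℝ) (ε : ℝ) : Set ℕ :=
  {q : ℕ | 1 ≤ q ∧ ∃ a : ℤ, |x - (a : ℝ) / (q : ℝ)| ≤ 1 / (q : ℝ) ^ ((2 : ℝ) + ε)}

lemma bounded_den_finite (x : ℝ) (B : ℕ) :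
    {q : ℚ | |x - (q : ℝ)| < 1 ∧ q.den ≤ B}.Finite := by
  apply Set.Finite.of_finite_image (f := fun q : ℚ => (q.num, q.den))
  · apply Set.Finite.subset
      (((Set.finite_Icc (-⌈(|x| + 1) * B⌉) ⌈(|x| + 1) * B⌉).prod (Set.finite_Iic B)))
    rintro ⟨m, d⟩ ⟨q, ⟨hq1, hq2⟩, hqe⟩
    simp only [Prod.mk.injEq] at hqe
    obtain ⟨rfl, rfl⟩ := hqe
    have hden : (0 : ℝ) < (q.den : ℝ) := by exact_mod_cast q.pos
    have habs : |(q : ℝ)| ≤ |x| + 1 := by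
      have := abs_sub_abs_le_abs_sub (q : ℝ) x
      rw [abs_sub_comm] at hq1
      linarith [abs_sub_abs_le_abs_sub (q : ℝ) x, le_of_lt hq1]
    have hnum : |(q.num : ℝ)| = |(q : ℝ)| * (q.den : ℝ) := by
      rw [Rat.cast_def, abs_div, abs_of_pos hden, div_mul_cancel₀ _ hden.ne']
    have hnum2 : |(q.num : ℝ)| ≤ (|x| + 1) * B := by
      rw [hnum]
      have hdb : (q.den : ℝ) ≤ (B : ℝ) := by exact_mod_cast hq2
      have h0 : (0 : ℝ) ≤ |x| + 1 := by positivity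
      calc |(q : ℝ)| * (q.den : ℝ) ≤ (|x| + 1) * (q.den : ℝ) :=
            mul_le_mul_of_nonneg_right habs hden.le
        _ ≤ (|x| + 1) * B := mul_le_mul_of_nonneg_left hdb h0
    have : |q.num| ≤ ⌈(|x| + 1) * B⌉ := by
      have : |(q.num : ℝ)| ≤ ((⌈(|x| + 1) * B⌉ : ℤ) : ℝ) := hnum2.trans (Int.le_ceil _)
      rw [← Int.cast_abs] at this
      exact_mod_cast this
    exact ⟨Set.mem_Icc.mpr (abs_le.mp this), hq2⟩
  · intro a _ b _ h
    simp only [Prod.mk.injEq] at h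
    exact Rat.ext h.1 h.2

lemma qSet_infinite {x : ℝ} (hx : Irrational x) : (qSet x).Infinite := by
  apply Set.infinite_of_forall_exists_gt
  intro B
  obtain ⟨q, hq, hq'⟩ := ((Real.infinite_rat_abs_sub_lt_one_div_den_sq_of_irrational hx).diff
    (bounded_den_finite x B)).nonempty
  simp only [Set.mem_setOf_eq] at hq
  have hden : (0 : ℝ) < (q.den : ℝ) := by exact_mod_cast q.pos
  have hden1 : (1 : ℝ) ≤ (q.den : ℝ) := by exact_mod_cast q.pos
  have h1 : |x - (q : ℝ)| < 1 := by
    refine hq.trans_le ?_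
    rw [div_le_one (by positivity)]
    nlinarith
  have hB : B < q.den := by
    by_contra h
    push_neg at h
    exact hq' ⟨h1, h⟩
  refine ⟨q.den, ⟨q.pos, ⟨q.num, ?_⟩⟩, hB⟩
  rw [← Rat.cast_def]
  exact hq.le

lemma pairs_finite (x : ℝ) {S : Set ℕ} (hS : S.Finite) :
    {pr : ℕ × ℤ | pr.1 ∈ S ∧ 1 ≤ pr.1 ∧ |x - (pr.2 : ℝ) / (pr.1 : ℝ)| ≤ 1}.Finite := by
  apply Set.Finite.subset (hS.biUnion
    (fun d _ => ((Set.finite_Icc (⌈(x - 1) * d⌉) ⌊(x + 1) * d⌋).image (fun a : ℤ => (d, a)))))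
  rintro ⟨d, a⟩ ⟨hdS, hd1, hab⟩
  have hd0 : (0 : ℝ) < (d : ℝ) := by exact_mod_cast hd1
  have h := abs_le.mp hab
  have hlow : x - 1 ≤ (a : ℝ) / (d : ℝ) := by linarith
  have hhigh : (a : ℝ) / (d : ℝ) ≤ x + 1 := by linarith
  refine Set.mem_biUnion hdS ⟨a, Set.mem_Icc.mpr ⟨?_, ?_⟩, rfl⟩
  · rw [Int.ceil_le]
    calc (x - 1) * d ≤ ((a : ℝ) / d) * d := mul_le_mul_of_nonneg_right hlow hd0.le
      _ = (a : ℝ) := div_mul_cancel₀ _ hd0.ne'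
  · rw [Int.le_floor]
    calc (a : ℝ) = ((a : ℝ) / d) * d := (div_mul_cancel₀ _ hd0.ne').symm
      _ ≤ (x + 1) * d := mul_le_mul_of_nonneg_right hhigh hd0.le

lemma key {x : ℝ} (hx : Irrational x) (hfin : ∀ ε : ℝ, 0 < ε → (sSet x ε).Finite) :
    (qSet x).Infinite ∧ ∀ ε : ℝ, 0 < ε → ∃ K : ℕ, ∀ k : ℕ, K ≤ k →
      (Nat.nth (· ∈ qSet x) (k + 1) : ℝ) ≤ (Nat.nth (· ∈ qSet x) k : ℝ) ^ ((1 : ℝ) + ε) := by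
  have hinf : (setOf (· ∈ qSet x)).Infinite := by
    exact qSet_infinite hx
  refine ⟨qSet_infinite hx, fun ε hε => ?_⟩
  have hS := hfin ε hε
  set P : Set (ℕ × ℤ) :=
    {pr : ℕ × ℤ | pr.1 ∈ sSet x ε ∧ 1 ≤ pr.1 ∧ |x - (pr.2 : ℝ) / (pr.1 : ℝ)| ≤ 1} with hPdef
  have hP : P.Finite := pairs_finite x hS
  have hpos : ∀ pr ∈ P, 0 < |x - (pr.2 : ℝ) / (pr.1 : ℝ)| := by
    rintro ⟨d, a⟩ ⟨hdS, hd1, -⟩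
    rw [abs_pos, sub_ne_zero]
    intro h
    exact hx ⟨(a : ℚ) / (d : ℚ), by
      rw [Rat.cast_div, Rat.cast_intCast, Rat.cast_natCast, ← h]⟩
  obtain ⟨δ, hδ0, hδ⟩ : ∃ δ : ℝ, 0 < δ ∧ ∀ pr ∈ P, δ ≤ |x - (pr.2 : ℝ) / (pr.1 : ℝ)| := by
    rcases P.eq_empty_or_nonempty with hPe | hPne
    · exact ⟨1, one_pos, by simp [hPe]⟩
    · set G := hP.toFinset.image (fun pr : ℕ × ℤ => |x - (pr.2 : ℝ) / (pr.1 : ℝ)|) with hG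
      have hGne : G.Nonempty := (hP.toFinset_nonempty.mpr hPne).image _
      refine ⟨G.min' hGne, ?_, fun pr hpr =>
        Finset.min'_le _ _ (Finset.mem_image_of_mem _ (hP.mem_toFinset.mpr hpr))⟩
      obtain ⟨pr, hprF, hpr⟩ := Finset.mem_image.mp (G.min'_mem hGne)
      rw [← hpr]
      exact hpos pr (hP.mem_toFinset.mp hprF)
  obtain ⟨K, hK⟩ := exists_nat_gt (1 / δ)
  refine ⟨K, fun k hk => ?_⟩
  by_contra hcon
  push_neg at hcon
  set A := Nat.nth (· ∈ qSet x) k with hAdef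
  set B := Nat.nth (· ∈ qSet x) (k + 1) with hBdef
  have hA1 : 1 ≤ A := (Nat.nth_mem_of_infinite hinf k).1
  have hABlt : A < B := (Nat.nth_lt_nth hinf).mpr (Nat.lt_succ_self k)
  have hA1R : (1 : ℝ) ≤ (A : ℝ) := by exact_mod_cast hA1
  have hB2 : 2 ≤ B := by omega
  have hN : 0 < B - 1 := by omega
  obtain ⟨q, hq, hqden⟩ := Real.exists_rat_abs_sub_le_and_den_le x hN
  have hNB : ((B - 1 : ℕ) : ℝ) + 1 = (B : ℝ) := by
    have : (1:ℕ) ≤ B := by omega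
    push_cast [Nat.cast_sub this]
    ring
  rw [hNB] at hq
  set d := q.den with hd
  have hd0 : 0 < d := q.pos
  have hd0R : (0 : ℝ) < (d : ℝ) := by exact_mod_cast hd0
  have hd1R : (1 : ℝ) ≤ (d : ℝ) := by exact_mod_cast hd0
  have hdB : d ≤ B - 1 := hqden
  have hB0R : (0 : ℝ) < (B : ℝ) := by positivity
  have hdBR : (d : ℝ) ≤ (B : ℝ) := by
    have : d ≤ B := by omega
    exact_mod_cast this
  -- d is a Dirichlet denominator
  have hdq : d ∈ qSet x := by
    refine ⟨hd0, q.num, ?_⟩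
    rw [← Rat.cast_def]
    refine hq.trans ?_
    rw [div_le_div_iff₀ (by positivity) (by positivity)]
    nlinarith
  -- hence d ≤ A
  have hdA : d ≤ A := Nat.le_nth_of_lt_nth_succ (by omega) hdq
  have hdAR : (d : ℝ) ≤ (A : ℝ) := by exact_mod_cast hdA
  -- B exceeds d^(1+ε)
  have hBd : (d : ℝ) ^ ((1 : ℝ) + ε) < (B : ℝ) :=
    lt_of_le_of_lt (Real.rpow_le_rpow hd0R.le hdAR (by linarith)) hcon
  have hrpow_pos : (0 : ℝ) < (d : ℝ) ^ ((2 : ℝ) + ε) := Real.rpow_pos_of_pos hd0R _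
  -- so d gives a very good approximation
  have hq2 : |x - (q.num : ℝ) / (d : ℝ)| ≤ 1 / (d : ℝ) ^ ((2 : ℝ) + ε) := by
    rw [← Rat.cast_def]
    refine hq.trans ?_
    rw [div_le_div_iff₀ (by positivity) hrpow_pos]
    have hsplit : (d : ℝ) ^ ((2 : ℝ) + ε) = (d : ℝ) ^ ((1 : ℝ) + ε) * (d : ℝ) := by
      rw [show (2 : ℝ) + ε = (1 + ε) + 1 by ring, Real.rpow_add hd0R, Real.rpow_one]
    rw [hsplit]
    have h1 : (0:ℝ) < (d:ℝ) := hd0R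
    nlinarith [Real.rpow_pos_of_pos hd0R ((1:ℝ) + ε)]
  have hdS : d ∈ sSet x ε := ⟨hd0, q.num, hq2⟩
  have hone : 1 / (d : ℝ) ^ ((2 : ℝ) + ε) ≤ 1 := by
    rw [div_le_one hrpow_pos]
    exact Real.one_le_rpow hd1R (by linarith)
  have hmemP : (d, q.num) ∈ P := ⟨hdS, hd0, hq2.trans hone⟩
  have hlb := hδ _ hmemP
  have hub : |x - (q.num : ℝ) / (d : ℝ)| ≤ 1 / (B : ℝ) := by
    rw [← Rat.cast_def]
    refine hq.trans ?_
    rw [div_le_div_iff₀ (by positivity) hB0R]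
    nlinarith
  have hKB : (K : ℝ) + 1 ≤ (B : ℝ) := by
    have hk1 : k + 1 ≤ B := by
      have := Nat.le_nth (p := (· ∈ qSet x)) (n := k + 1) (fun hf => absurd hf hinf)
      omega
    have : K + 1 ≤ B := by omega
    exact_mod_cast this
  have hsmall : 1 / (B : ℝ) < δ := by
    rw [div_lt_iff₀ hB0R]
    have h1 : 1 < δ * K := by
      rw [div_lt_iff₀ hδ0] at hK
      linarith [mul_comm δ (K : ℝ)]
    nlinarith [hδ0]
  have := hpos _ hmemP
  linarith

lemma ae_good : ∀ᵐ x : ℝ, Irrational x ∧ ∀ ε : ℝ, 0 < ε → (sSet x ε).Finite := by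
  have hirr : ∀ᵐ x : ℝ, Irrational x := by
    rw [ae_iff]
    have h : {x : ℝ | ¬ Irrational x} = Set.range ((↑) : ℚ → ℝ) := by
      ext x
      simp [Irrational]
    rw [h]
    exact (Set.countable_range _).measure_zero _
  filter_upwards [hirr, ae_not_liouvilleWith] with x hx hL
  refine ⟨hx, fun ε hε => ?_⟩
  rw [← Set.not_infinite]
  intro hinf
  refine hL (2 + ε) (by linarith) ⟨2, ?_⟩
  rw [Nat.frequently_atTop_iff_infinite]
  refine hinf.mono ?_
  rintro q ⟨hq1, a, ha⟩
  have hq0 : (0 : ℝ) < (q : ℝ) := by exact_mod_cast hq1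
  refine ⟨a, ?_, ?_⟩
  · intro h
    exact hx ⟨(a : ℚ) / (q : ℚ), by
      rw [Rat.cast_div, Rat.cast_intCast, Rat.cast_natCast, ← h]⟩
  · refine lt_of_le_of_lt ha ?_
    have hp : (0 : ℝ) < (q : ℝ) ^ ((2 : ℝ) + ε) := Real.rpow_pos_of_pos hq0 _
    rw [div_lt_div_iff₀ hp hp]
    nlinarith

/-- For almost every `t`, the set `Q(t)` of Dirichlet denominators is infinite and its
increasing enumeration `q₁(t) < q₂(t) < ⋯` satisfies `q_{k+1}(t) ≤ q_k(t)^{1+ε}` for all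
sufficiently large `k`.  (Here `Nat.nth (· ∈ dirichletSet t) k = q_{k+1}(t)`.) -/
theorem consecutive_denominators :
    ∀ᵐ t : ℝ, (dirichletSet t).Infinite ∧
      ∀ ε : ℝ, 0 < ε → ∃ K : ℕ, ∀ k : ℕ, K ≤ k →
        (Nat.nth (· ∈ dirichletSet t) (k + 1) : ℝ) ≤
          (Nat.nth (· ∈ dirichletSet t) k : ℝ) ^ ((1 : ℝ) + ε) := by
  have h2pi : ((2 * Real.pi)⁻¹ : ℝ) ≠ 0 := inv_ne_zero (by positivity)
  have hQMP : Measure.QuasiMeasurePreserving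
      (fun t : ℝ => (2 * Real.pi)⁻¹ * t) volume volume := by
    refine ⟨measurable_const_mul _, ?_⟩
    rw [Real.map_volume_mul_left h2pi]
    exact Measure.smul_absolutelyContinuous
  filter_upwards [hQMP.ae ae_good] with t ht
  have h := key ht.1 ht.2
  have hrw : dirichletSet t = qSet ((2 * Real.pi)⁻¹ * t) := by
    unfold dirichletSet qSet
    rw [div_eq_inv_mul]
  rw [hrw]
  exact h
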